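/- Let C be a smooth Frobenius non-classical plane curve of degree d over F_q (characteristic p > 2), and let L be an F_q-line that intersects C transversely. Then all d points of L ∩ C are F_q-rational; equivalently, any F_q-line that contains a non-F_q-rational point Q of C is tangent to C at Q (L = T_Q(C)). -/

import Mathlib

open MvPolynomial

noncomputable section

/-- The projective plane over a field `K`, as the projectivization of `K^3`. -/
abbrev ProjPlane (K : Type*) [Field K] := Projectivization K (Fin 3 → K)

variable {F : Type*} [Field F]

/-- A geometric point (over the algebraic closure) lies on the plane curve defined by `f`. -/
def OnCurve (f : MvPolynomial (Fin 3) F) (P : ProjPlane (AlgebraicClosure F)) : Prop :=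
  aeval P.rep f = 0

/-- A geometric point lies on the `F`-rational line with coefficient vector `a`. -/
def OnLine (a : Fin 3 → F) (P : ProjPlane (AlgebraicClosure F)) : Prop :=
  ∑ i, algebraMap F (AlgebraicClosure F) (a i) * P.rep i = 0

/-- The plane curve defined by `f` is smooth: the gradient of `f` is nonzero at every
geometric point of the curve. -/
def SmoothCurve (f : MvPolynomial (Fin 3) F) : Prop :=
  ∀ P : ProjPlane (AlgebraicClosure F), OnCurve f P → ∃ i, aeval P.rep (pderiv i f) ≠ 0

/-- The `F`-line with coefficients `a` meets the curve defined by `f` transversely: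
the intersection consists of exactly `d` distinct geometric points. -/
def Transverse (f : MvPolynomial (Fin 3) F) (a : Fin 3 → F) (d : ℕ) : Prop :=
  {P : ProjPlane (AlgebraicClosure F) | OnCurve f P ∧ OnLine a P}.ncard = d

/-- The restriction of `f` to the line `t ↦ v + t • w`, as a univariate polynomial. -/
def LinePoly (f : MvPolynomial (Fin 3) F) (v w : Fin 3 → AlgebraicClosure F) :
    Polynomial (AlgebraicClosure F) :=
  aeval (fun i => Polynomial.C (v i) + Polynomial.X * Polynomial.C (w i)) f

/-- `P` is a flex point of the curve defined by `f`: the tangent line at `P` meets the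
curve at `P` with intersection multiplicity at least 3. The tangent line is parametrized
through `P.rep` and a direction `w` lying on the tangent line, independent from `P.rep`. -/
def IsFlex (f : MvPolynomial (Fin 3) F) (P : ProjPlane (AlgebraicClosure F)) : Prop :=
  OnCurve f P ∧ ∃ w : Fin 3 → AlgebraicClosure F,
    (¬ ∃ c : AlgebraicClosure F, w = c • P.rep) ∧
    (∑ i, aeval P.rep (pderiv i f) * w i = 0) ∧
    (Polynomial.X : Polynomial (AlgebraicClosure F)) ^ 3 ∣ LinePoly f P.rep w

/-- The `F`-line with coefficients `a` is the tangent line to the curve `f` at the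
geometric point `P`, i.e. `a` is proportional to the gradient of `f` at `P`. -/
def IsTangentAt (f : MvPolynomial (Fin 3) F) (a : Fin 3 → F)
    (P : ProjPlane (AlgebraicClosure F)) : Prop :=
  OnCurve f P ∧ ∃ c : AlgebraicClosure F, c ≠ 0 ∧
    ∀ i, algebraMap F (AlgebraicClosure F) (a i) = c * aeval P.rep (pderiv i f)

/-- The `q`-power Frobenius map on the projective plane. -/
def FrobPt {K : Type*} [Field K] (q : ℕ) (P : ProjPlane K) : ProjPlane K :=
  Projectivization.mk K (fun i => P.rep i ^ q) (by
    intro hc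
    rcases Nat.eq_zero_or_pos q with h0 | h0
    · have := congrFun hc 0
      simp [h0] at this
    · apply P.rep_nonzero
      funext i
      have := congrFun hc i
      simp only [Pi.zero_apply] at this ⊢
      exact pow_eq_zero_iff h0.ne' |>.mp this)

/-- A geometric point of the projective plane is `F`-rational. -/
def IsRationalPt (P : ProjPlane (AlgebraicClosure F)) : Prop :=
  ∃ v : Fin 3 → F, v ≠ 0 ∧ ∃ c : AlgebraicClosure F, c ≠ 0 ∧
    ∀ i, P.rep i = c * algebraMap F (AlgebraicClosure F) (v i)

/-- The curve defined by `f` is Frobenius non-classical over `F` (with `q = #F`):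
the image of every geometric point of the curve under the `q`-power Frobenius lies on
the tangent line at that point. -/
def FrobeniusNonClassical (f : MvPolynomial (Fin 3) F) (q : ℕ) : Prop :=
  ∀ P : ProjPlane (AlgebraicClosure F), OnCurve f P →
    ∑ i, aeval P.rep (pderiv i f) * P.rep i ^ q = 0


section AuxLemmas

variable {R K : Type*} [CommRing R] [CommRing K] [Algebra R K]

lemma aux_derivative_aeval_linear (f : MvPolynomial (Fin 3) R) (v w : Fin 3 → K) :
    Polynomial.derivative
      (MvPolynomial.aeval (fun i => Polynomial.C (v i) + Polynomial.X * Polynomial.C (w i)) f)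
    = ∑ i, MvPolynomial.aeval
        (fun i => Polynomial.C (v i) + Polynomial.X * Polynomial.C (w i)) (pderiv i f)
        * Polynomial.C (w i) := by
  set s : Fin 3 → Polynomial K :=
    fun i => Polynomial.C (v i) + Polynomial.X * Polynomial.C (w i) with hs
  induction f using MvPolynomial.induction_on with
  | C a => simp
  | add p q hp hq => simp [map_add, hp, hq, Finset.sum_add_distrib, add_mul]
  | mul_X p i hp =>
      classical
      simp only [map_mul, MvPolynomial.aeval_X, Polynomial.derivative_mul, hp]
      have hderiv : Polynomial.derivative (s i) = Polynomial.C (w i) := by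
        simp [hs]
      rw [hderiv]
      have hpd : ∀ j, pderiv j (p * MvPolynomial.X i)
          = pderiv j p * MvPolynomial.X i + p * (if i = j then 1 else 0) := by
        intro j
        rw [pderiv_mul]
        simp [pderiv_X, Pi.single_apply]
      simp only [hpd, map_add, map_mul, MvPolynomial.aeval_X, mul_ite, mul_one, mul_zero,
        apply_ite (MvPolynomial.aeval s), map_zero, add_mul, ite_mul, zero_mul]
      rw [Finset.sum_add_distrib, Finset.sum_ite_eq Finset.univ i
        (fun j => (MvPolynomial.aeval s) p * Polynomial.C (w j))]
      simp only [Finset.mem_univ, if_true]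
      rw [Finset.sum_mul]
      rw [add_left_inj]
      exact Finset.sum_congr rfl fun j _ => by ring

lemma aux_eval_aeval_linear (f : MvPolynomial (Fin 3) R) (v w : Fin 3 → K) (t : K) :
    Polynomial.eval t
      (MvPolynomial.aeval (fun i => Polynomial.C (v i) + Polynomial.X * Polynomial.C (w i)) f)
    = MvPolynomial.aeval (fun i => v i + t * w i) f := by
  have := MvPolynomial.comp_aeval_apply
    (f := fun i => Polynomial.C (v i) + Polynomial.X * Polynomial.C (w i))
    ((Polynomial.aeval t : Polynomial K →ₐ[K] K).restrictScalars R) f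
  simp only [AlgHom.restrictScalars_apply] at this
  rw [show (fun i => (Polynomial.aeval t) (Polynomial.C (v i) + Polynomial.X * Polynomial.C (w i)))
      = fun i => v i + t * w i from funext fun i => by
        simp only [map_add, map_mul, Polynomial.aeval_C, Polynomial.aeval_X,
          Algebra.algebraMap_self, RingHom.id_apply]] at this
  rw [← this, Polynomial.aeval_def]
  rw [Polynomial.eval, Algebra.algebraMap_self]

end AuxLemmas

section AuxField

lemma aux_hdeg {d : ℕ} {f : MvPolynomial (Fin 3) F} (hfd : f.IsHomogeneous d)
    {m : Fin 3 →₀ ℕ} (hm : m ∈ f.support) : ∑ i, m i = d := by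
  have h1 := hfd (MvPolynomial.mem_support_iff.mp hm)
  rw [Pi.one_def, ← Finsupp.degree_eq_weight_one] at h1
  rw [← h1, Finsupp.degree]
  exact (Finset.sum_subset (Finset.subset_univ _) (by
    intro i _ hi
    simpa using Finsupp.notMem_support_iff.mp hi)).symm

lemma aux_aeval_smul_of_homogeneous {d : ℕ} {f : MvPolynomial (Fin 3) F}
    (hfd : f.IsHomogeneous d) {K : Type*} [Field K] [Algebra F K] (c : K) (x : Fin 3 → K) :
    MvPolynomial.aeval (c • x) f = c ^ d * MvPolynomial.aeval x f := by
  classical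
  rw [MvPolynomial.aeval_def, MvPolynomial.aeval_def, MvPolynomial.eval₂_eq',
    MvPolynomial.eval₂_eq', Finset.mul_sum]
  refine Finset.sum_congr rfl fun m hm => ?_
  have hdeg : ∑ i, m i = d := aux_hdeg hfd hm
  have : ∏ i, ((c • x) i) ^ m i = c ^ d * ∏ i, x i ^ m i := by
    simp only [Pi.smul_apply, smul_eq_mul, mul_pow]
    rw [Finset.prod_mul_distrib, Finset.prod_pow_eq_pow_sum, hdeg]
  rw [this]; ring

lemma aux_natDegree_aeval_linear_le {d : ℕ} {f : MvPolynomial (Fin 3) F}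
    (hfd : f.IsHomogeneous d) {K : Type*} [Field K] [Algebra F K] (v w : Fin 3 → K) :
    (MvPolynomial.aeval
      (fun i => Polynomial.C (v i) + Polynomial.X * Polynomial.C (w i)) f).natDegree ≤ d := by
  classical
  rw [MvPolynomial.aeval_def, MvPolynomial.eval₂_eq']
  refine Polynomial.natDegree_sum_le_of_forall_le _ _ fun m hm => ?_
  have hdeg : ∑ i, m i = d := aux_hdeg hfd hm
  refine (Polynomial.natDegree_mul_le).trans ?_
  rw [Polynomial.algebraMap_apply, Polynomial.natDegree_C, zero_add]
  refine (Polynomial.natDegree_prod_le _ _).trans ?_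
  rw [← hdeg]
  refine Finset.sum_le_sum fun i _ => ?_
  refine (Polynomial.natDegree_pow_le).trans ?_
  have : (Polynomial.C (v i) + Polynomial.X * Polynomial.C (w i)).natDegree ≤ 1 := by
    refine (Polynomial.natDegree_add_le _ _).trans ?_
    simp [Polynomial.natDegree_C]
    exact Polynomial.natDegree_mul_le.trans (by simp)
  calc m i * (Polynomial.C (v i) + Polynomial.X * Polynomial.C (w i)).natDegree
      ≤ m i * 1 := Nat.mul_le_mul_left _ this
    _ = m i := Nat.mul_one _

lemma aux_coeff_aeval_linear {d : ℕ} {f : MvPolynomial (Fin 3) F}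
    (hfd : f.IsHomogeneous d) {K : Type*} [Field K] [Algebra F K] (v w : Fin 3 → K) :
    (MvPolynomial.aeval
      (fun i => Polynomial.C (v i) + Polynomial.X * Polynomial.C (w i)) f).coeff d
      = MvPolynomial.aeval w f := by
  classical
  rw [MvPolynomial.aeval_def, MvPolynomial.aeval_def, MvPolynomial.eval₂_eq',
    MvPolynomial.eval₂_eq', Polynomial.finset_sum_coeff]
  refine Finset.sum_congr rfl fun m hm => ?_
  have hdeg : ∑ i, m i = d := aux_hdeg hfd hm
  rw [Polynomial.algebraMap_apply, Polynomial.coeff_C_mul, ← hdeg]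
  congr 1
  have hlin : ∀ i : Fin 3,
      (Polynomial.C (v i) + Polynomial.X * Polynomial.C (w i)).natDegree ≤ 1 := by
    intro i
    refine (Polynomial.natDegree_add_le _ _).trans ?_
    simp [Polynomial.natDegree_C]
    exact Polynomial.natDegree_mul_le.trans (by simp)
  have hc1 : ∀ i : Fin 3,
      (Polynomial.C (v i) + Polynomial.X * Polynomial.C (w i)).coeff 1 = w i := by
    intro i
    simp [Polynomial.coeff_add, Polynomial.coeff_C]
  have hpow : ∀ i : Fin 3,
      ((Polynomial.C (v i) + Polynomial.X * Polynomial.C (w i)) ^ m i).coeff (m i)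
        = w i ^ m i := by
    intro i
    have := Polynomial.coeff_pow_of_natDegree_le
      (p := Polynomial.C (v i) + Polynomial.X * Polynomial.C (w i))
      (n := 1) (m := m i) (hlin i)
    rw [mul_one] at this
    rw [this, hc1]
  have hpowdeg : ∀ i : Fin 3,
      ((Polynomial.C (v i) + Polynomial.X * Polynomial.C (w i)) ^ m i).natDegree ≤ m i := by
    intro i
    refine Polynomial.natDegree_pow_le.trans ?_
    calc m i * (Polynomial.C (v i) + Polynomial.X * Polynomial.C (w i)).natDegree
        ≤ m i * 1 := Nat.mul_le_mul_left _ (hlin i)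
      _ = m i := Nat.mul_one _
  rw [Fin.prod_univ_three, Fin.prod_univ_three, Fin.sum_univ_three]
  rw [Polynomial.coeff_mul_add_eq_of_natDegree_le
      (Polynomial.natDegree_mul_le.trans (add_le_add (hpowdeg 0) (hpowdeg 1))) (hpowdeg 2),
    Polynomial.coeff_mul_add_eq_of_natDegree_le (hpowdeg 0) (hpowdeg 1), hpow, hpow, hpow]

lemma aux_fixed_mem_range [Fintype F] {K : Type*} [Field K] [Algebra F K] {x : K}
    (hx : x ^ Fintype.card F = x) : ∃ a : F, x = algebraMap F K a := by
  classical
  set q := Fintype.card F with hq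
  have hq1 : 1 < q := Fintype.one_lt_card
  set g : Polynomial K := Polynomial.X ^ q - Polynomial.X with hg
  have hgne : g ≠ 0 := FiniteField.X_pow_card_sub_X_ne_zero K hq1
  have hdeg : g.natDegree = q := FiniteField.X_pow_card_sub_X_natDegree_eq K hq1
  set R : Finset K := g.roots.toFinset with hR
  set img : Finset K := Finset.univ.image (algebraMap F K) with himg
  have hsub : img ⊆ R := by
    intro y hy
    simp only [himg, Finset.mem_image] at hy
    obtain ⟨a, -, rfl⟩ := hy
    rw [hR, Multiset.mem_toFinset, Polynomial.mem_roots hgne]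
    simp only [hg, Polynomial.IsRoot.def, Polynomial.eval_sub, Polynomial.eval_pow,
      Polynomial.eval_X]
    rw [← map_pow, FiniteField.pow_card, sub_self]
  have hcardimg : img.card = q := by
    rw [himg, Finset.card_image_of_injective _ (algebraMap F K).injective, Finset.card_univ]
  have hcardR : R.card ≤ q := by
    refine (Multiset.toFinset_card_le _).trans ?_
    exact_mod_cast (Polynomial.card_roots' g).trans hdeg.le
  have heq : img = R := Finset.eq_of_subset_of_card_le hsub (by omega)
  have hxR : x ∈ R := by
    rw [hR, Multiset.mem_toFinset, Polynomial.mem_roots hgne]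
    simp [hg, Polynomial.IsRoot.def, hx]
  rw [← heq] at hxR
  simp only [himg, Finset.mem_image] at hxR
  obtain ⟨a, -, ha⟩ := hxR
  exact ⟨a, ha.symm⟩

end AuxField

lemma aux_mem_span_of_ker {K : Type*} [Field K] (b : Fin 3 → K) (hb : b ≠ 0)
    (v w : Fin 3 → K) (hv : v ≠ 0) (hw : ∀ c : K, c • v ≠ w)
    (hAv : ∑ i, b i * v i = 0) (hAw : ∑ i, b i * w i = 0)
    (x : Fin 3 → K) (hx : ∑ i, b i * x i = 0) :
    ∃ α β : K, α • v + β • w = x := by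
  classical
  set A : (Fin 3 → K) →ₗ[K] K := ∑ i, b i • (LinearMap.proj i) with hA
  have hAapp : ∀ y : Fin 3 → K, A y = ∑ i, b i * y i := by
    intro y
    simp [hA, LinearMap.sum_apply, LinearMap.smul_apply, LinearMap.proj_apply, smul_eq_mul]
  have hAne : A ≠ 0 := by
    obtain ⟨j, hj⟩ := Function.ne_iff.mp hb
    intro h
    apply hj
    have := congrArg (fun φ => φ (Pi.single j 1)) h
    simpa [hAapp, Pi.single_apply, Finset.sum_ite_eq] using this
  have hker : Module.finrank K (LinearMap.ker A) = 2 := by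
    have h1 : Module.finrank K (LinearMap.ker A) + 1 = Module.finrank K (Fin 3 → K) :=
      Module.Dual.finrank_ker_add_one_of_ne_zero hAne
    simp [Module.finrank_pi] at h1
    omega
  have hli : LinearIndependent K ![v, w] := (LinearIndependent.pair_iff' hv).mpr hw
  have hrange : Set.range ![v, w] = {v, w} := by
    simp [Matrix.range_cons, Matrix.range_empty, Set.pair_comm]
  have hspanle : Submodule.span K (Set.range ![v, w]) ≤ LinearMap.ker A := by
    rw [Submodule.span_le, hrange]
    rintro y (rfl | rfl) <;> simp [LinearMap.mem_ker, hAapp, hAv, hAw]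
  have hspanrank : Module.finrank K (Submodule.span K (Set.range ![v, w])) = 2 := by
    rw [finrank_span_eq_card hli]
    simp
  have heq : Submodule.span K (Set.range ![v, w]) = LinearMap.ker A :=
    Submodule.eq_of_le_of_finrank_eq hspanle (by rw [hspanrank, hker])
  have hxmem : x ∈ Submodule.span K ({v, w} : Set (Fin 3 → K)) := by
    rw [← hrange, heq]
    simp [LinearMap.mem_ker, hAapp, hx]
  exact Submodule.mem_span_pair.mp hxmem

lemma aux_X_sq_dvd {K : Type*} [Field K] {h : Polynomial K} (h0 : h.coeff 0 = 0)
    (h1 : h.coeff 1 = 0) : (Polynomial.X : Polynomial K) ^ 2 ∣ h := by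
  obtain ⟨g, rfl⟩ := Polynomial.X_dvd_iff.mpr h0
  rw [Polynomial.coeff_X_mul] at h1
  obtain ⟨g2, rfl⟩ := Polynomial.X_dvd_iff.mpr h1
  rw [pow_two, ← mul_assoc]
  exact dvd_mul_right _ _


set_option maxHeartbeats 1000000 in
/-- If `C` is a smooth Frobenius non-classical plane curve over `F_q` and `L` is an
`F_q`-line meeting `C` transversely, then every geometric point of `L ∩ C` is
`F_q`-rational. -/
theorem frobenius_nonclassical_transverse_points_rational
    (p q d : ℕ) [Fact p.Prime] (hp : 2 < p)
    (F : Type*) [Field F] [Fintype F] [CharP F p] (hcard : Fintype.card F = q)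
    (f : MvPolynomial (Fin 3) F) (hf0 : f ≠ 0) (hfd : f.IsHomogeneous d)
    (hsmooth : SmoothCurve f)
    (hfnc : FrobeniusNonClassical f q)
    (a : Fin 3 → F) (ha : a ≠ 0) (htrans : Transverse f a d) :
    ∀ P : ProjPlane (AlgebraicClosure F), OnCurve f P → OnLine a P → IsRationalPt P := by
  classical
  intro P hC hL
  by_contra hirr
  subst hcard
  set K := AlgebraicClosure F with hK
  obtain ⟨n, hpn, hqpn⟩ := FiniteField.card F p
  set q := Fintype.card F with hq
  have hq1 : 1 < q := Fintype.one_lt_card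
  have hq0 : q ≠ 0 := by omega
  set v : Fin 3 → K := P.rep with hv_def
  have hv : v ≠ 0 := P.rep_nonzero
  set w : Fin 3 → K := fun i => v i ^ q with hw_def
  set b : Fin 3 → K := fun i => algebraMap F K (a i) with hb_def
  have hbq : ∀ i, b i ^ q = b i := fun i => by
    simp only [hb_def]
    rw [← map_pow, FiniteField.pow_card]
  have hb : b ≠ 0 := by
    obtain ⟨j, hj⟩ := Function.ne_iff.mp ha
    refine Function.ne_iff.mpr ⟨j, ?_⟩
    simp only [hb_def, Pi.zero_apply]
    exact fun h => hj ((algebraMap F K).injective (by simpa using h))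
  have hAv : ∑ i, b i * v i = 0 := hL
  have hAw : ∑ i, b i * w i = 0 := by
    have h1 : ∑ i, b i * w i = (∑ i, b i * v i) ^ q := by
      rw [hqpn, sum_pow_char_pow]
      refine Finset.sum_congr rfl fun i _ => ?_
      rw [mul_pow, ← hqpn, hbq, hw_def]
    rw [h1, hAv, zero_pow hq0]
  -- non-rationality gives that w is not proportional to v
  have hwv : ∀ c : K, c • v ≠ w := by
    intro c hc
    apply hirr
    obtain ⟨i₀, hi₀⟩ := Function.ne_iff.mp hv
    simp only [Pi.zero_apply] at hi₀
    have hcv : ∀ i, v i ^ q = c * v i := fun i => (congrFun hc i).symm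
    have hc0 : c ≠ 0 := by
      intro h0
      apply hi₀
      have h1 := hcv i₀
      rw [h0, zero_mul] at h1
      exact pow_eq_zero_iff hq0 |>.mp h1
    have hufix : ∀ i, (v i / v i₀) ^ q = v i / v i₀ := by
      intro i
      rw [div_pow, hcv i, hcv i₀, mul_div_mul_left _ _ hc0]
    have hex : ∀ i, ∃ a : F, v i / v i₀ = algebraMap F K a := fun i =>
      aux_fixed_mem_range (hufix i)
    choose vec hvec using hex
    refine ⟨vec, ?_, v i₀, hi₀, fun i => ?_⟩
    · intro h0
      have h1 := hvec i₀
      rw [h0] at h1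
      simp only [Pi.zero_apply, map_zero] at h1
      rw [div_self hi₀] at h1
      exact one_ne_zero h1
    · rw [← hvec i]
      field_simp
      rfl
  have hli : LinearIndependent K ![v, w] := (LinearIndependent.pair_iff' hv).mpr hwv
  have hpair := LinearIndependent.pair_iff.mp hli
  have hw0 : w ≠ 0 := by
    intro h0
    exact hwv 0 (by rw [h0, zero_smul])
  have hvt : ∀ t : K, v + t • w ≠ 0 := by
    intro t h0
    have h1 := (hpair 1 t (by simpa [one_smul] using h0)).1
    exact one_ne_zero h1
  have hd1 : 1 ≤ d := by
    by_contra hd0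
    have hd0' : d = 0 := by omega
    subst hd0'
    have h1 : aeval ((0 : K) • v) f = (0 : K) ^ 0 * aeval v f :=
      aux_aeval_smul_of_homogeneous hfd 0 v
    rw [zero_smul, pow_zero, one_mul] at h1
    have hC' : aeval v f = 0 := hC
    rw [hC', MvPolynomial.aeval_zero] at h1
    have h2 : constantCoeff f = 0 := (algebraMap F K).injective (by simpa using h1)
    obtain ⟨m, hm⟩ := MvPolynomial.ne_zero_iff.mp hf0
    have h3 := hfd hm
    rw [Pi.one_def, ← Finsupp.degree_eq_weight_one, Finsupp.degree_eq_zero_iff] at h3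
    subst h3
    exact hm (by simpa [MvPolynomial.constantCoeff_eq] using h2)
  -- the restriction of f to the line through v and w
  set s : Fin 3 → Polynomial K :=
    fun i => Polynomial.C (v i) + Polynomial.X * Polynomial.C (w i) with hs_def
  set h : Polynomial K := aeval s f with hh_def
  have hfun : ∀ t : K, (fun i => v i + t * w i) = v + t • w := by
    intro t
    funext i
    simp [Pi.add_apply, Pi.smul_apply, smul_eq_mul]
  have heval : ∀ t : K, Polynomial.eval t h = aeval (v + t • w) f := by
    intro t
    rw [hh_def, hs_def, aux_eval_aeval_linear, hfun t]
  -- the set of intersection points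
  set S : Set (ProjPlane K) := {Q : ProjPlane K | OnCurve f Q ∧ OnLine a Q} with hS_def
  have hScard : S.ncard = d := htrans
  have hlinsum : ∀ t : K, ∑ i, b i * (v + t • w) i = 0 := by
    intro t
    calc ∑ i, b i * (v + t • w) i
        = ∑ i, (b i * v i + t * (b i * w i)) := by
          refine Finset.sum_congr rfl fun i _ => ?_
          simp only [Pi.add_apply, Pi.smul_apply, smul_eq_mul]
          ring
      _ = ∑ i, b i * v i + t * ∑ i, b i * w i := by
          rw [Finset.sum_add_distrib, ← Finset.mul_sum]
      _ = 0 := by rw [hAv, hAw, mul_zero, add_zero]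
  have hmk_mem : ∀ (t : K), Polynomial.eval t h = 0 →
      Projectivization.mk K (v + t • w) (hvt t) ∈ S := by
    intro t ht
    obtain ⟨u, hu⟩ := Projectivization.exists_smul_eq_mk_rep K (v + t • w) (hvt t)
    rw [Units.smul_def] at hu
    constructor
    · show aeval (Projectivization.mk K (v + t • w) (hvt t)).rep f = 0
      rw [← hu, aux_aeval_smul_of_homogeneous hfd, ← heval t, ht, mul_zero]
    · show ∑ i, b i * (Projectivization.mk K (v + t • w) (hvt t)).rep i = 0
      rw [← hu]
      calc ∑ i, b i * ((u : K) • (v + t • w)) i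
          = (u : K) * ∑ i, b i * (v + t • w) i := by
            rw [Finset.mul_sum]
            refine Finset.sum_congr rfl fun i _ => ?_
            simp only [Pi.smul_apply, smul_eq_mul]
            ring
        _ = 0 := by rw [hlinsum t, mul_zero]
  have hne : h ≠ 0 := by
    intro h0
    have hinj : Function.Injective (fun t : K => Projectivization.mk K (v + t • w) (hvt t)) := by
      intro t t' htt
      obtain ⟨u, hu⟩ := (Projectivization.mk_eq_mk_iff K _ _ (hvt t) (hvt t')).mp htt
      rw [Units.smul_def] at hu
      have hzero : ((u : K) - 1) • v + ((u : K) * t' - t) • w = 0 := by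
        funext i
        have hcomp := congrFun hu i
        simp only [Pi.smul_apply, Pi.add_apply, smul_eq_mul] at hcomp ⊢
        simp only [Pi.zero_apply]
        linear_combination hcomp
      obtain ⟨h1, h2⟩ := hpair _ _ hzero
      have hu1 : (u : K) = 1 := by linear_combination h1
      rw [hu1, one_mul] at h2
      linear_combination -h2
    have hSinf : S.Infinite :=
      Set.infinite_of_injective_forall_mem hinj fun t =>
        hmk_mem t (by rw [h0, Polynomial.eval_zero])
    rw [hSinf.ncard] at hScard
    omega
  -- h has a double root at 0
  have hc0 : h.coeff 0 = 0 := by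
    rw [Polynomial.coeff_zero_eq_eval_zero, heval 0, zero_smul, add_zero]
    exact hC
  have hc1 : h.coeff 1 = 0 := by
    have hder := aux_derivative_aeval_linear f v w
    rw [← hs_def, ← hh_def] at hder
    have h1 : Polynomial.eval 0 (Polynomial.derivative h) = h.coeff 1 := by
      rw [← Polynomial.coeff_zero_eq_eval_zero, Polynomial.coeff_derivative]
      norm_num
    rw [← h1, hder, Polynomial.eval_finset_sum]
    have h2 : ∀ i, Polynomial.eval 0 (aeval s (pderiv i f) * Polynomial.C (w i))
        = aeval v (pderiv i f) * w i := by
      intro i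
      rw [Polynomial.eval_mul, Polynomial.eval_C]
      congr 1
      rw [hs_def, aux_eval_aeval_linear,
        show (fun j => v j + (0:K) * w j) = v from funext fun j => by simp]
    rw [Finset.sum_congr rfl fun i _ => h2 i]
    exact hfnc P hC
  have hX2 : (Polynomial.X : Polynomial K) ^ 2 ∣ h := aux_X_sq_dvd hc0 hc1
  have hmult : 2 ≤ h.rootMultiplicity 0 := by
    rw [Polynomial.le_rootMultiplicity_iff hne]
    simpa using hX2
  have hcount : 2 ≤ h.roots.count 0 := by
    rw [Polynomial.count_roots]
    exact hmult
  have hdegle : h.natDegree ≤ d := aux_natDegree_aeval_linear_le hfd v w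
  have hcoeffd : h.coeff d = aeval w f := aux_coeff_aeval_linear hfd v w
  have hcard1 : h.roots.toFinset.card + 1 ≤ Multiset.card h.roots := by
    have h0mem : (0 : K) ∈ h.roots.toFinset := by
      rw [Multiset.mem_toFinset, ← Multiset.count_pos]
      omega
    calc h.roots.toFinset.card + 1
        = ∑ _x ∈ h.roots.toFinset, 1 + 1 := by rw [Finset.sum_const, smul_eq_mul, mul_one]
      _ = ∑ x ∈ h.roots.toFinset, (1 + if x = 0 then 1 else 0) := by
          rw [Finset.sum_add_distrib]
          congr 1
          rw [Finset.sum_ite_eq' h.roots.toFinset 0 (fun _ => 1)]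
          simp [h0mem]
      _ ≤ ∑ x ∈ h.roots.toFinset, h.roots.count x := by
          refine Finset.sum_le_sum fun x hx => ?_
          by_cases hx0 : x = 0
          · subst hx0; simpa using hcount
          · simp only [hx0, if_false, add_zero]
            rw [Multiset.one_le_count_iff_mem]
            exact Multiset.mem_toFinset.mp hx
      _ = Multiset.card h.roots := Multiset.toFinset_sum_count_eq _
  have hcroots : Multiset.card h.roots ≤ h.natDegree := by
    exact_mod_cast Polynomial.card_roots' h
  -- every intersection point is on the parametrized line
  have hsubset : S ⊆ (fun t : K => Projectivization.mk K (v + t • w) (hvt t)) ''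
      (h.roots.toFinset : Set K) ∪ {Projectivization.mk K w hw0} := by
    rintro Q ⟨hQC, hQL⟩
    have hrep : Q.rep ≠ 0 := Q.rep_nonzero
    obtain ⟨α, β, hαβ⟩ := aux_mem_span_of_ker b hb v w hv hwv hAv hAw Q.rep hQL
    by_cases hα : α = 0
    · right
      subst hα
      rw [zero_smul, zero_add] at hαβ
      have hβ : β ≠ 0 := by
        intro h0
        rw [h0, zero_smul] at hαβ
        exact hrep hαβ.symm
      have hQeq : Q = Projectivization.mk K w hw0 := by
        conv_lhs => rw [← Projectivization.mk_rep Q]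
        rw [Projectivization.mk_eq_mk_iff]
        exact ⟨Units.mk0 β hβ, by rw [Units.smul_def, Units.val_mk0]; exact hαβ⟩
      simpa using hQeq
    · left
      set t : K := α⁻¹ * β with ht_def
      have hQrep : Q.rep = α • (v + t • w) := by
        rw [← hαβ, smul_add, smul_smul, ht_def]
        congr 2
        rw [← mul_assoc, mul_inv_cancel₀ hα, one_mul]
      have hroot : Polynomial.eval t h = 0 := by
        have h1 : aeval (α • (v + t • w)) f = α ^ d * aeval (v + t • w) f :=
          aux_aeval_smul_of_homogeneous hfd α _
        rw [← hQrep] at h1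
        have h2 : aeval Q.rep f = 0 := hQC
        rw [h2] at h1
        rw [heval t]
        exact ((mul_eq_zero.mp h1.symm).resolve_left (pow_ne_zero _ hα))
      refine ⟨t, ?_, ?_⟩
      · rw [Finset.mem_coe, Multiset.mem_toFinset, Polynomial.mem_roots hne]
        exact hroot
      · show Projectivization.mk K (v + t • w) (hvt t) = Q
        conv_rhs => rw [← Projectivization.mk_rep Q]
        rw [Projectivization.mk_eq_mk_iff]
        exact ⟨Units.mk0 α⁻¹ (inv_ne_zero hα), by
          rw [Units.smul_def, Units.val_mk0, hQrep, smul_smul, inv_mul_cancel₀ hα, one_smul]⟩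
  have hTfin : ((fun t : K => Projectivization.mk K (v + t • w) (hvt t)) ''
      (h.roots.toFinset : Set K) ∪ {Projectivization.mk K w hw0}).Finite :=
    (h.roots.toFinset.finite_toSet.image _).union (Set.finite_singleton _)
  have himgcard : ((fun t : K => Projectivization.mk K (v + t • w) (hvt t)) ''
      (h.roots.toFinset : Set K)).ncard ≤ h.roots.toFinset.card := by
    have h1 := Set.ncard_image_le (s := (h.roots.toFinset : Set K))
      (f := fun t : K => Projectivization.mk K (v + t • w) (hvt t))
      h.roots.toFinset.finite_toSet
    simpa [Set.ncard_coe_finset] using h1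
  by_cases hfw : aeval w f = 0
  · -- degree drops
    have hndlt : h.natDegree < d := by
      have hnd : h.natDegree ≠ d := by
        intro hEq
        have hlc := Polynomial.leadingCoeff_ne_zero.mpr hne
        rw [Polynomial.leadingCoeff, hEq, hcoeffd] at hlc
        exact hlc hfw
      omega
    have hScard_le : S.ncard ≤ h.roots.toFinset.card + 1 := by
      refine le_trans (Set.ncard_le_ncard hsubset hTfin) ?_
      refine le_trans (Set.ncard_union_le _ _) ?_
      have h2 : ({Projectivization.mk K w hw0} : Set (ProjPlane K)).ncard = 1 :=
        Set.ncard_singleton _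
      omega
    omega
  · -- mk w is not on the curve, and natDegree = d
    have hwnot : Projectivization.mk K w hw0 ∉ S := by
      rintro ⟨hQC, -⟩
      obtain ⟨u, hu⟩ := Projectivization.exists_smul_eq_mk_rep K w hw0
      rw [Units.smul_def] at hu
      have h1 : aeval ((u : K) • w) f = (u : K) ^ d * aeval w f :=
        aux_aeval_smul_of_homogeneous hfd _ _
      rw [hu] at h1
      have h2 : aeval (Projectivization.mk K w hw0).rep f = 0 := hQC
      rw [h2] at h1
      exact hfw ((mul_eq_zero.mp h1.symm).resolve_left (pow_ne_zero _ u.ne_zero))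
    have hsubset' : S ⊆ (fun t : K => Projectivization.mk K (v + t • w) (hvt t)) ''
        (h.roots.toFinset : Set K) := by
      intro Q hQ
      rcases hsubset hQ with hmem | hmem
      · exact hmem
      · exact absurd (Set.mem_singleton_iff.mp hmem ▸ hQ) hwnot
    have hScard_le : S.ncard ≤ h.roots.toFinset.card :=
      le_trans (Set.ncard_le_ncard hsubset' (h.roots.toFinset.finite_toSet.image _)) himgcard
    have hdge : d ≤ h.natDegree := Polynomial.le_natDegree_of_ne_zero (by
      rw [hcoeffd]; exact hfw)
    omega


end
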